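/- In the interacting Pólya urn model, fix an agent i with true bias parameter γ_i ≠ 1, and let φ_i = 1 if γ_i > 1 and φ_i = 0 if γ_i < 1 (the inherent belief). Define the inherent belief estimator φ̂_i(t) = 1 if Σ_{τ=2}^t ψ_{i,τ} > Σ_{τ=1}^{t−1} μ_i(τ), and φ̂_i(t) = 0 otherwise. Then almost surely φ̂_i(t) = φ_i for all sufficiently large t. -/

import Mathlib

open MeasureTheory Filter
open scoped ENNReal NNReal

/-- The declaration probability function `f(μ, γ) = γμ/(1 + (γ − 1)μ)`. -/
noncomputable def declProb (μ γ : ℝ) : ℝ := γ * μ / (1 + (γ - 1) * μ)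

/-- `β_i(t) = (b_i^1 + Σ_{τ=2}^t ψ_{i,τ})/t`, the time-averaged declarations of agent `i`. -/
noncomputable def declAvg {Ω : Type*} {n : ℕ} (b1 : Fin n → ℝ)
    (ψ : Fin n → ℕ → Ω → ℝ) (i : Fin n) (t : ℕ) (ω : Ω) : ℝ :=
  (b1 i + ∑ τ ∈ Finset.Icc 2 t, ψ i τ ω) / t

/-- `μ_i(t) = (1/deg(i)) Σ_j a_{i,j} β_j(t)`, the observed neighborhood average. -/
noncomputable def obsAvg {Ω : Type*} {n : ℕ} (a : Fin n → Fin n → ℝ) (b1 : Fin n → ℝ)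
    (ψ : Fin n → ℕ → Ω → ℝ) (i : Fin n) (t : ℕ) (ω : Ω) : ℝ :=
  (∑ j, a i j * declAvg b1 ψ j t ω) / (∑ j, a i j)

/-- The inherent belief estimator: `φ̂_i(t) = 1` if
`Σ_{τ=2}^t ψ_{i,τ} > Σ_{τ=1}^{t−1} μ_i(τ)`, and `φ̂_i(t) = 0` otherwise. -/
noncomputable def beliefEstimator {Ω : Type*} {n : ℕ} (a : Fin n → Fin n → ℝ)
    (b1 : Fin n → ℝ) (ψ : Fin n → ℕ → Ω → ℝ) (i : Fin n) (t : ℕ) (ω : Ω) : ℝ :=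
  if (∑ τ ∈ Finset.Icc 1 (t - 1), obsAvg a b1 ψ i τ ω) < ∑ τ ∈ Finset.Icc 2 t, ψ i τ ω
    then 1 else 0

/-- Concavity bound: for `γ > 0`, `γ ≠ 1`, the concave function
`x ↦ log(1+(γ-1)x) - x log γ` vanishing at `0` and `1` is bounded below by a
positive multiple of `min x (1-x)` on `[0,1]`. -/
lemma logAffine_bound {γ : ℝ} (hγ0 : 0 < γ) (hγ1 : γ ≠ 1) :
    ∃ c > 0, ∀ x : ℝ, 0 ≤ x → x ≤ 1 →
      c * min x (1 - x) ≤ Real.log (1 + (γ - 1) * x) - Real.log γ * x := by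
  set A : ℝ := (1 + γ) / 2 with hA
  have hApos : 0 < A := by positivity
  refine ⟨2 * (Real.log A - Real.log γ / 2), ?_, ?_⟩
  · have hsq : Real.sqrt γ ≠ 1 := fun h => hγ1 (by
      have := Real.sq_sqrt hγ0.le
      rw [h] at this; simpa using this.symm)
    have h2 : 0 < (1 - Real.sqrt γ)^2 :=
      pow_two_pos_of_ne_zero (sub_ne_zero.2 (Ne.symm hsq))
    have h1 : Real.sqrt γ < A := by
      have h3 : Real.sqrt γ ^ 2 = γ := Real.sq_sqrt hγ0.le
      nlinarith [Real.sqrt_nonneg γ]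
    have := Real.log_lt_log (Real.sqrt_pos.2 hγ0) h1
    rw [Real.log_sqrt hγ0.le] at this
    linarith
  · intro x hx0 hx1
    have hconc := strictConcaveOn_log_Ioi.concaveOn
    rcases le_or_gt x (1/2) with hhalf | hhalf
    · rw [min_eq_left (by linarith)]
      have key : 2 * x * Real.log A + (1 - 2*x) * Real.log 1 ≤
          Real.log (2*x*A + (1-2*x)*1) := by
        have := hconc.2 (Set.mem_Ioi.2 hApos) (Set.mem_Ioi.2 one_pos)
          (by linarith : (0:ℝ) ≤ 2*x) (by linarith : (0:ℝ) ≤ 1 - 2*x) (by ring)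
        simpa [smul_eq_mul] using this
      have heq : 2*x*A + (1-2*x)*1 = 1 + (γ-1)*x := by rw [hA]; ring
      rw [heq, Real.log_one] at key
      nlinarith [key]
    · rw [min_eq_right (by linarith)]
      have key : 2 * (1-x) * Real.log A + (2*x-1) * Real.log γ ≤
          Real.log (2*(1-x)*A + (2*x-1)*γ) := by
        have := hconc.2 (Set.mem_Ioi.2 hApos) (Set.mem_Ioi.2 hγ0)
          (by linarith : (0:ℝ) ≤ 2*(1-x)) (by linarith : (0:ℝ) ≤ 2*x - 1) (by ring)
        simpa [smul_eq_mul] using this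
      have heq : 2*(1-x)*A + (2*x-1)*γ = 1 + (γ-1)*x := by rw [hA]; ring
      rw [heq] at key
      nlinarith [key]

/-- Index shift for sums over integer intervals. -/
lemma sum_Icc_shift (g : ℕ → ℝ) (t : ℕ) :
    ∑ τ ∈ Finset.Icc 1 (t-1), g (τ+1) = ∑ τ ∈ Finset.Icc 2 t, g τ := by
  rcases Nat.eq_zero_or_pos t with h | h
  · subst h
    rw [Finset.Icc_eq_empty (by omega), Finset.Icc_eq_empty (by omega)]
    simp
  · have h2 : Finset.Icc 2 t = (Finset.Icc 1 (t-1)).map (addRightEmbedding 1) := by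
      rw [Finset.map_add_right_Icc]; congr 1 <;> omega
    rw [h2, Finset.sum_map]
    rfl

/-- Divergence of the (shifted) harmonic series over `Icc 1 (t-1)`. -/
lemma harmonic_Icc_tendsto :
    Tendsto (fun t : ℕ => ∑ τ ∈ Finset.Icc 1 (t-1), (1/(τ:ℝ))) atTop atTop := by
  have hrange : ∀ m : ℕ, ∑ τ ∈ Finset.Icc 1 m, (1/(τ:ℝ))
      = ∑ k ∈ Finset.range m, (1 / ((k:ℝ) + 1)) := by
    intro m
    have h2 : Finset.Icc 1 m = (Finset.range m).map (addRightEmbedding 1) := by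
      rw [Finset.range_eq_Ico, Finset.map_add_right_Ico, Finset.Ico_add_one_right_eq_Icc]
    rw [h2, Finset.sum_map]
    apply Finset.sum_congr rfl
    intro k _
    simp [addRightEmbedding]
  have heq : (fun t : ℕ => ∑ τ ∈ Finset.Icc 1 (t-1), (1/(τ:ℝ)))
      = (fun m : ℕ => ∑ k ∈ Finset.range m, (1 / ((k:ℝ) + 1))) ∘ (fun t => t - 1) := by
    funext t; exact hrange (t-1)
  rw [heq]
  exact Real.tendsto_sum_range_one_div_nat_succ_atTop.comp (tendsto_sub_atTop_nat 1)

/-- In the interacting Pólya urn model, fix an agent `i` with true bias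
parameter `γ_i ≠ 1`, and let `φ_i = 1` if `γ_i > 1` and `φ_i = 0` if `γ_i < 1` (the
inherent belief). Then almost surely the inherent belief estimator `φ̂_i(t)` equals
`φ_i` for all sufficiently large `t`. -/
theorem belief_estimator_eventually_correct
    {Ω : Type*} {m0 : MeasurableSpace Ω} (P : Measure Ω) [IsProbabilityMeasure P]
    (ℱ : Filtration ℕ m0)
    (n : ℕ) (hn : 1 ≤ n)
    (a : Fin n → Fin n → ℝ) (ha_symm : ∀ i j, a i j = a j i)
    (ha_nonneg : ∀ i j, 0 ≤ a i j) (hdeg : ∀ i, 0 < ∑ j, a i j)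
    (γ : Fin n → ℝ) (hγ : ∀ i, 0 < γ i)
    (b0 b1 : Fin n → ℝ) (hb0 : ∀ i, 0 < b0 i) (hb1 : ∀ i, 0 < b1 i)
    (hb : ∀ i, b0 i + b1 i = 1)
    (ψ : Fin n → ℕ → Ω → ℝ)
    (hψ01 : ∀ i t ω, ψ i t ω = 0 ∨ ψ i t ω = 1)
    (hψ_adapted : ∀ (i : Fin n) (t : ℕ), 2 ≤ t → Measurable[ℱ t] (ψ i t))
    (hdyn : ∀ (i : Fin n) (t : ℕ), 1 ≤ t →
      P[ψ i (t + 1)|ℱ t] =ᵐ[P] fun ω => declProb (obsAvg a b1 ψ i t ω) (γ i))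
    (i : Fin n) (hγi : γ i ≠ 1) :
    ∀ᵐ ω ∂P, ∀ᶠ t in atTop,
      beliefEstimator a b1 ψ i t ω = if 1 < γ i then 1 else 0 := by
  classical
  have hγ0 : 0 < γ i := hγ i
  obtain ⟨c, hc, hq⟩ := logAffine_bound hγ0 hγi
  -- a uniform lower bound on the initial weights
  obtain ⟨ε, hε0, hεb1, hεb0⟩ : ∃ ε : ℝ, 0 < ε ∧ (∀ j, ε ≤ b1 j) ∧ (∀ j, ε ≤ b0 j) := by
    obtain ⟨j0, -, hj0⟩ := Finset.exists_min_image Finset.univ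
      (fun j => min (b1 j) (b0 j)) ⟨(⟨0, hn⟩ : Fin n), Finset.mem_univ _⟩
    exact ⟨min (b1 j0) (b0 j0), lt_min (hb1 j0) (hb0 j0),
      fun j => le_trans (hj0 j (Finset.mem_univ j)) (min_le_left _ _),
      fun j => le_trans (hj0 j (Finset.mem_univ j)) (min_le_right _ _)⟩
  have hψ0 : ∀ j t ω, 0 ≤ ψ j t ω := by
    intro j t ω; rcases hψ01 j t ω with h | h <;> rw [h] <;> norm_num
  have hψ1 : ∀ j t ω, ψ j t ω ≤ 1 := by
    intro j t ω; rcases hψ01 j t ω with h | h <;> rw [h] <;> norm_num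
  set μf : ℕ → Ω → ℝ := obsAvg a b1 ψ i with hμf
  -- pointwise bounds on the observed average
  have hμb : ∀ t : ℕ, 1 ≤ t → ∀ ω, ε / t ≤ μf t ω ∧ μf t ω ≤ 1 - ε / t := by
    intro t ht ω
    have htR : (0:ℝ) < t := by exact_mod_cast ht
    have hβ : ∀ j, ε / t ≤ declAvg b1 ψ j t ω ∧ declAvg b1 ψ j t ω ≤ 1 - ε / t := by
      intro j
      have hs0 : 0 ≤ ∑ τ ∈ Finset.Icc 2 t, ψ j τ ω :=
        Finset.sum_nonneg fun τ _ => hψ0 j τ ω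
      have hs1 : ∑ τ ∈ Finset.Icc 2 t, ψ j τ ω ≤ (t:ℝ) - 1 := by
        have hcard : (Finset.Icc 2 t).card = t - 1 := by rw [Nat.card_Icc]; omega
        calc ∑ τ ∈ Finset.Icc 2 t, ψ j τ ω ≤ ∑ τ ∈ Finset.Icc 2 t, (1:ℝ) :=
              Finset.sum_le_sum fun τ _ => hψ1 j τ ω
          _ = ((t - 1 : ℕ) : ℝ) := by
              rw [Finset.sum_const, hcard, nsmul_eq_mul, mul_one]
          _ ≤ (t:ℝ) - 1 := by
              rw [Nat.cast_sub ht]; norm_num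
      constructor
      · rw [declAvg, div_le_div_iff_of_pos_right htR]
        have := hεb1 j
        linarith
      · rw [declAvg, div_le_iff₀ htR]
        have h1 : (1 - ε / ↑t) * ↑t = ↑t - ε := by field_simp
        rw [h1]
        have := hεb0 j
        have := hb j
        linarith
    have hdegpos := hdeg i
    constructor
    · rw [hμf]
      simp only [obsAvg]
      rw [le_div_iff₀ hdegpos]
      calc ε / ↑t * ∑ j, a i j = ∑ j, a i j * (ε / ↑t) := by
            rw [Finset.mul_sum]; exact Finset.sum_congr rfl fun j _ => mul_comm _ _
        _ ≤ ∑ j, a i j * declAvg b1 ψ j t ω :=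
            Finset.sum_le_sum fun j _ => mul_le_mul_of_nonneg_left (hβ j).1 (ha_nonneg i j)
    · rw [hμf]
      simp only [obsAvg]
      rw [div_le_iff₀ hdegpos]
      calc ∑ j, a i j * declAvg b1 ψ j t ω ≤ ∑ j, a i j * (1 - ε / ↑t) :=
            Finset.sum_le_sum fun j _ => mul_le_mul_of_nonneg_left (hβ j).2 (ha_nonneg i j)
        _ = (1 - ε / ↑t) * ∑ j, a i j := by
            rw [Finset.mul_sum]; exact Finset.sum_congr rfl fun j _ => mul_comm _ _
  have hμ01 : ∀ t : ℕ, 1 ≤ t → ∀ ω, 0 ≤ μf t ω ∧ μf t ω ≤ 1 := by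
    intro t ht ω
    have h := hμb t ht ω
    have htR : (0:ℝ) < t := by exact_mod_cast ht
    have hεt : 0 ≤ ε / (t:ℝ) := by positivity
    exact ⟨le_trans hεt h.1, by linarith [h.2]⟩
  have hd : ∀ t : ℕ, 1 ≤ t → ∀ ω, 0 < 1 + (γ i - 1) * μf t ω := by
    intro t ht ω
    obtain ⟨h1, h2⟩ := hμ01 t ht ω
    rcases le_or_gt 1 (γ i) with h | h
    · nlinarith
    · nlinarith
  -- measurability
  have hψm : ∀ (j : Fin n) (τ : ℕ), 2 ≤ τ → Measurable (ψ j τ) :=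
    fun j τ h => (hψ_adapted j τ h).mono (ℱ.le τ) le_rfl
  have hψmF : ∀ (t : ℕ) (j : Fin n) (τ : ℕ), 2 ≤ τ → τ ≤ t → Measurable[ℱ t] (ψ j τ) :=
    fun t j τ h hle => (hψ_adapted j τ h).mono (ℱ.mono hle) le_rfl
  have hμm : ∀ (m : MeasurableSpace Ω) (τ : ℕ),
      (∀ (j : Fin n) (σ : ℕ), 2 ≤ σ → σ ≤ τ → Measurable[m] (ψ j σ)) →
      Measurable[m] (μf τ) := by
    intro m τ hm
    rw [hμf]
    show Measurable[m] fun ω => (∑ j, a i j * declAvg b1 ψ j τ ω) / (∑ j, a i j)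
    simp only [declAvg]
    apply Measurable.div_const
    apply Finset.measurable_sum
    intro j _
    apply Measurable.const_mul
    apply Measurable.div_const
    apply Measurable.const_add
    apply Finset.measurable_sum
    intro σ hσ
    have hσ' := Finset.mem_Icc.1 hσ
    exact hm j σ hσ'.1 hσ'.2
  -- the likelihood-ratio martingale
  set ξ : ℕ → Ω → ℝ := fun τ ω =>
    Real.log (1 + (γ i - 1) * μf τ ω) + Real.log (γ i)⁻¹ * ψ i (τ+1) ω with hξ
  set L : ℕ → Ω → ℝ := fun t ω => ∑ τ ∈ Finset.Icc 1 (t-1), ξ τ ω with hL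
  set W : ℕ → Ω → ℝ := fun t ω => Real.exp (L t ω) with hW
  have hWpos : ∀ t ω, 0 < W t ω := fun t ω => Real.exp_pos _
  have hWmF : ∀ t, Measurable[ℱ t] (W t) := by
    intro t
    simp only [hW, hL]
    apply Measurable.exp
    apply Finset.measurable_sum
    intro τ hτ
    obtain ⟨h1, h2⟩ := Finset.mem_Icc.1 hτ
    simp only [hξ]
    apply Measurable.add
    · exact (((hμm (ℱ t) τ (fun j σ hσ2 hστ =>
        hψmF t j σ hσ2 (by omega))).const_mul (γ i - 1)).const_add 1).log
    · exact (hψmF t i (τ+1) (by omega) (by omega)).const_mul _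
  have hWm : ∀ t, Measurable (W t) := fun t => (hWmF t).mono (ℱ.le t) le_rfl
  -- uniform (in ω) bounds
  set Cξ : ℝ := |Real.log (γ i)| + |Real.log (γ i)⁻¹| with hCξ
  have hCξ0 : 0 ≤ Cξ := by positivity
  have hξbound : ∀ τ : ℕ, 1 ≤ τ → ∀ ω, |ξ τ ω| ≤ Cξ := by
    intro τ hτ ω
    obtain ⟨h01a, h01b⟩ := hμ01 τ hτ ω
    have hda : |Real.log (1 + (γ i - 1) * μf τ ω)| ≤ |Real.log (γ i)| := by
      rcases le_or_gt 1 (γ i) with h | h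
      · have h1d : 1 ≤ 1 + (γ i - 1) * μf τ ω := by nlinarith
        have hdγ : 1 + (γ i - 1) * μf τ ω ≤ γ i := by nlinarith
        rw [abs_of_nonneg (Real.log_nonneg h1d), abs_of_nonneg (Real.log_nonneg h)]
        exact Real.log_le_log (by linarith) hdγ
      · have hγd : γ i ≤ 1 + (γ i - 1) * μf τ ω := by nlinarith
        have hd1 : 1 + (γ i - 1) * μf τ ω ≤ 1 := by nlinarith
        rw [abs_of_nonpos (Real.log_nonpos (by linarith) hd1),
          abs_of_nonpos (Real.log_nonpos hγ0.le h.le)]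
        exact neg_le_neg (Real.log_le_log hγ0 hγd)
    have hψabs : |ψ i (τ+1) ω| ≤ 1 :=
      abs_le.2 ⟨by linarith [hψ0 i (τ+1) ω], hψ1 i (τ+1) ω⟩
    calc |ξ τ ω| ≤ |Real.log (1 + (γ i - 1) * μf τ ω)| + |Real.log (γ i)⁻¹ * ψ i (τ+1) ω| := by
          simp only [hξ]; exact abs_add_le _ _
      _ ≤ |Real.log (γ i)| + |Real.log (γ i)⁻¹| * 1 := by
          refine add_le_add hda ?_
          rw [abs_mul]
          exact mul_le_mul_of_nonneg_left hψabs (abs_nonneg _)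
      _ = Cξ := by rw [mul_one]
  have hLbound : ∀ t ω, |L t ω| ≤ t * Cξ := by
    intro t ω
    calc |L t ω| ≤ ∑ τ ∈ Finset.Icc 1 (t-1), |ξ τ ω| := by
          simp only [hL]; exact Finset.abs_sum_le_sum_abs _ _
      _ ≤ ∑ τ ∈ Finset.Icc 1 (t-1), Cξ :=
          Finset.sum_le_sum fun τ hτ => hξbound τ (Finset.mem_Icc.1 hτ).1 ω
      _ = ((Finset.Icc 1 (t-1)).card : ℝ) * Cξ := by rw [Finset.sum_const, nsmul_eq_mul]
      _ ≤ (t:ℝ) * Cξ := by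
          apply mul_le_mul_of_nonneg_right _ hCξ0
          have hcard : (Finset.Icc 1 (t-1)).card = t - 1 := by rw [Nat.card_Icc]; omega
          rw [hcard]
          exact_mod_cast Nat.cast_le.2 (by omega : t - 1 ≤ t)
  have hIntB : ∀ (g : Ω → ℝ) (C : ℝ), Measurable g → (∀ ω, |g ω| ≤ C) → Integrable g P := by
    intro g C hg hC
    refine ⟨hg.aestronglyMeasurable, ?_⟩
    apply HasFiniteIntegral.of_bounded (C := C)
    exact ae_of_all _ fun ω => by rw [Real.norm_eq_abs]; exact hC ω
  have hWbd : ∀ t ω, |W t ω| ≤ Real.exp (t * Cξ) := by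
    intro t ω
    rw [abs_of_pos (hWpos t ω)]
    simp only [hW]
    exact Real.exp_le_exp.2 (le_trans (le_abs_self _) (hLbound t ω))
  have hWint : ∀ t, Integrable (W t) P :=
    fun t => hIntB (W t) (Real.exp (t * Cξ)) (hWm t) (hWbd t)
  have hW0const : W 0 = fun _ => (1:ℝ) := by
    funext ω; simp only [hW, hL]; rw [Finset.Icc_eq_empty (by omega)]; simp
  -- the martingale property
  have hmart : Martingale W ℱ P := by
    apply martingale_nat (fun t => (hWmF t).stronglyMeasurable) hWint
    intro t
    rcases Nat.eq_zero_or_pos t with rfl | ht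
    · have hW1 : W (0+1) = fun _ => (1:ℝ) := by
        funext ω; simp only [hW, hL]; rw [Finset.Icc_eq_empty (by omega)]; simp
      rw [hW0const, condExp_const (ℱ.le 0) (1:ℝ)]
    · obtain ⟨s, rfl⟩ : ∃ s, t = s + 1 := ⟨t - 1, by omega⟩
      have hdpos : ∀ ω, 0 < 1 + (γ i - 1) * μf (s+1) ω := hd (s+1) (by omega)
      set U : Ω → ℝ := fun ω => W (s+1) ω * (1 + (γ i - 1) * μf (s+1) ω) with hU
      set V : Ω → ℝ := fun ω => U ω * ((γ i)⁻¹ - 1) with hV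
      have hsplit : W (s+1+1) = fun ω => U ω + V ω * ψ i (s+1+1) ω := by
        funext ω
        have hL2 : L (s+1+1) ω = L (s+1) ω + ξ (s+1) ω := by
          simp only [hL]
          rw [show s+1+1-1 = s+1 from rfl, show s+1-1 = s from rfl,
            Finset.sum_Icc_succ_top (by omega : 1 ≤ s + 1)]
        have hξval : Real.exp (ξ (s+1) ω)
            = (1 + (γ i - 1) * μf (s+1) ω) * (1 + ((γ i)⁻¹ - 1) * ψ i (s+1+1) ω) := by
          simp only [hξ]
          rw [Real.exp_add, Real.exp_log (hdpos ω)]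
          rcases hψ01 i (s+1+1) ω with h | h
          · rw [h]; simp
          · rw [h, mul_one, mul_one, Real.exp_log (by positivity : (0:ℝ) < (γ i)⁻¹)]
            ring
        show Real.exp (L (s+1+1) ω) = U ω + V ω * ψ i (s+1+1) ω
        rw [hL2, Real.exp_add, hξval]
        simp only [hU, hV, hW]
        ring
      have hμmF1 : Measurable[ℱ (s+1)] (μf (s+1)) :=
        hμm _ _ (fun j σ h2 hle => hψmF (s+1) j σ h2 hle)
      have hdmF : Measurable[ℱ (s+1)] (fun ω => 1 + (γ i - 1) * μf (s+1) ω) :=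
        (hμmF1.const_mul _).const_add 1
      have hUmF : Measurable[ℱ (s+1)] U := by
        simp only [hU]; exact (hWmF (s+1)).mul hdmF
      have hVmF : Measurable[ℱ (s+1)] V := by
        simp only [hV]; exact hUmF.mul_const _
      have hdbd : ∀ ω, |1 + (γ i - 1) * μf (s+1) ω| ≤ 1 + |γ i - 1| := by
        intro ω
        obtain ⟨h1, h2⟩ := hμ01 (s+1) (by omega) ω
        calc |1 + (γ i - 1) * μf (s+1) ω| ≤ |(1:ℝ)| + |(γ i - 1) * μf (s+1) ω| := abs_add_le _ _
          _ ≤ 1 + |γ i - 1| * 1 := by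
              rw [abs_one, abs_mul]
              refine add_le_add le_rfl (mul_le_mul_of_nonneg_left ?_ (abs_nonneg _))
              rw [abs_of_nonneg h1]; exact h2
          _ = 1 + |γ i - 1| := by rw [mul_one]
      set CU : ℝ := Real.exp (((s+1 : ℕ) : ℝ) * Cξ) * (1 + |γ i - 1|) with hCU
      have hUbd : ∀ ω, |U ω| ≤ CU := by
        intro ω
        simp only [hU, hCU]
        rw [abs_mul]
        exact mul_le_mul (hWbd (s+1) ω) (hdbd ω) (abs_nonneg _) (Real.exp_pos _).le
      have hCU0 : 0 ≤ CU := by rw [hCU]; positivity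
      have hVbd : ∀ ω, |V ω| ≤ CU * |(γ i)⁻¹ - 1| := by
        intro ω
        simp only [hV]
        rw [abs_mul]
        exact mul_le_mul_of_nonneg_right (hUbd ω) (abs_nonneg _)
      have hUm : Measurable U := hUmF.mono (ℱ.le _) le_rfl
      have hVm : Measurable V := hVmF.mono (ℱ.le _) le_rfl
      have hUint : Integrable U P := hIntB U CU hUm hUbd
      have hψint : Integrable (ψ i (s+1+1)) P :=
        hIntB _ 1 (hψm i (s+1+1) (by omega))
          (fun ω => abs_le.2 ⟨by linarith [hψ0 i (s+1+1) ω], hψ1 i (s+1+1) ω⟩)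
      have hVψint : Integrable (fun ω => V ω * ψ i (s+1+1) ω) P := by
        apply hIntB _ (CU * |(γ i)⁻¹ - 1|) (hVm.mul (hψm i (s+1+1) (by omega)))
        intro ω
        rw [Pi.mul_apply, abs_mul]
        calc |V ω| * |ψ i (s+1+1) ω| ≤ (CU * |(γ i)⁻¹ - 1|) * 1 := by
              refine mul_le_mul (hVbd ω) ?_ (abs_nonneg _) (by positivity)
              exact abs_le.2 ⟨by linarith [hψ0 i (s+1+1) ω], hψ1 i (s+1+1) ω⟩
          _ = CU * |(γ i)⁻¹ - 1| := mul_one _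
      have hψcond := hdyn i (s+1) (by omega)
      rw [← hμf] at hψcond
      have step1 : P[W (s+1+1)|ℱ (s+1)]
          =ᵐ[P] P[U|ℱ (s+1)] + P[(fun ω => V ω * ψ i (s+1+1) ω)|ℱ (s+1)] := by
        rw [hsplit]
        exact condExp_add hUint hVψint _
      have step2 : P[U|ℱ (s+1)] = U :=
        condExp_of_stronglyMeasurable (ℱ.le (s+1)) hUmF.stronglyMeasurable hUint
      have step3 : P[(fun ω => V ω * ψ i (s+1+1) ω)|ℱ (s+1)]
          =ᵐ[P] V * P[ψ i (s+1+1)|ℱ (s+1)] :=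
        condExp_mul_of_stronglyMeasurable_left hVmF.stronglyMeasurable hVψint hψint
      have hfinal : ∀ ω, U ω + V ω * declProb (μf (s+1) ω) (γ i) = W (s+1) ω := by
        intro ω
        have hdne : (1 + (γ i - 1) * μf (s+1) ω) ≠ 0 := (hdpos ω).ne'
        simp only [hU, hV, declProb]
        field_simp
        ring
      have hsum : P[U|ℱ (s+1)] + P[(fun ω => V ω * ψ i (s+1+1) ω)|ℱ (s+1)] =ᵐ[P] W (s+1) := by
        rw [step2]
        filter_upwards [step3, hψcond] with ω h3 hψc
        have h4 : (P[(fun ω => V ω * ψ i (s+1+1) ω)|ℱ (s+1)]) ω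
            = V ω * declProb (μf (s+1) ω) (γ i) := by
          rw [h3]
          simp only [Pi.mul_apply]
          rw [hψc]
        simp only [Pi.add_apply, h4]
        exact hfinal ω
      exact (step1.trans hsum).symm
  -- L¹ boundedness and a.s. convergence
  have hmean : ∀ t, ∫ ω, W t ω ∂P = 1 := by
    intro t
    have h0 : P[W t|ℱ 0] =ᵐ[P] W 0 := hmart.condExp_ae_eq (Nat.zero_le t)
    calc ∫ ω, W t ω ∂P = ∫ ω, (P[W t|ℱ 0]) ω ∂P := (integral_condExp (ℱ.le 0)).symm
      _ = ∫ ω, W 0 ω ∂P := integral_congr_ae h0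
      _ = 1 := by rw [hW0const]; simp
  have hbdd : ∀ t, eLpNorm (W t) 1 P ≤ ((1:ℝ≥0) : ℝ≥0∞) := by
    intro t
    rw [eLpNorm_one_eq_lintegral_enorm]
    have heq : ∀ ω', (‖W t ω'‖₊ : ℝ≥0∞) = ENNReal.ofReal (W t ω') := fun ω' => by
      rw [← enorm_eq_nnnorm, ← ofReal_norm, Real.norm_eq_abs, abs_of_pos (hWpos t ω')]
    calc ∫⁻ ω', (‖W t ω'‖₊ : ℝ≥0∞) ∂P = ∫⁻ ω', ENNReal.ofReal (W t ω') ∂P :=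
          lintegral_congr heq
      _ = ENNReal.ofReal (∫ ω', W t ω' ∂P) :=
          (ofReal_integral_eq_lintegral_ofReal (hWint t)
            (ae_of_all _ fun ω' => (hWpos t ω').le)).symm
      _ ≤ ((1:ℝ≥0) : ℝ≥0∞) := by rw [hmean t]; simp
  have hconv := hmart.submartingale.ae_tendsto_limitProcess (R := 1) hbdd
  -- deterministic divergence of the drift
  have hHsum := harmonic_Icc_tendsto
  -- conclusion
  filter_upwards [hconv] with ω hω
  obtain ⟨K, hK⟩ := hω.bddAbove_range
  have hK1 : (1:ℝ) ≤ K := by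
    have h0 : W 0 ω = 1 := by rw [hW0const]
    have := hK (Set.mem_range_self 0)
    rw [h0] at this
    exact this
  have hKpos : 0 < K := lt_of_lt_of_le one_pos hK1
  have hLK : ∀ t : ℕ, L t ω ≤ Real.log K := by
    intro t
    have h1 : W t ω ≤ K := hK (Set.mem_range_self t)
    have h2 : Real.exp (L t ω) ≤ K := by simpa [hW] using h1
    exact (Real.le_log_iff_exp_le hKpos).2 h2
  have hLid : ∀ t : ℕ, Real.log (γ i) * ((∑ τ ∈ Finset.Icc 2 t, ψ i τ ω)
        - ∑ τ ∈ Finset.Icc 1 (t-1), μf τ ω)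
      = (∑ τ ∈ Finset.Icc 1 (t-1),
          (Real.log (1 + (γ i - 1) * μf τ ω) - Real.log (γ i) * μf τ ω)) - L t ω := by
    intro t
    have hshift : ∑ τ ∈ Finset.Icc 1 (t-1), ψ i (τ+1) ω = ∑ τ ∈ Finset.Icc 2 t, ψ i τ ω :=
      sum_Icc_shift (fun σ => ψ i σ ω) t
    simp only [hL, hξ]
    rw [Finset.sum_add_distrib, ← Finset.mul_sum, hshift, Real.log_inv,
      Finset.sum_sub_distrib, ← Finset.mul_sum]
    ring
  have hQ : ∀ t : ℕ, (c * ε) * (∑ τ ∈ Finset.Icc 1 (t-1), (1/(τ:ℝ)))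
      ≤ ∑ τ ∈ Finset.Icc 1 (t-1),
        (Real.log (1 + (γ i - 1) * μf τ ω) - Real.log (γ i) * μf τ ω) := by
    intro t
    rw [Finset.mul_sum]
    apply Finset.sum_le_sum
    intro τ hτ
    obtain ⟨h1, h2⟩ := Finset.mem_Icc.1 hτ
    have hμτ := hμb τ h1 ω
    have hτR : (0:ℝ) < τ := by exact_mod_cast h1
    obtain ⟨h01a, h01b⟩ := hμ01 τ h1 ω
    have hmin : ε / τ ≤ min (μf τ ω) (1 - μf τ ω) :=
      le_min hμτ.1 (by linarith [hμτ.2])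
    calc c * ε * (1/(τ:ℝ)) = c * (ε/τ) := by ring
      _ ≤ c * min (μf τ ω) (1 - μf τ ω) := mul_le_mul_of_nonneg_left hmin hc.le
      _ ≤ _ := hq (μf τ ω) h01a h01b
  have hev : ∀ᶠ t : ℕ in atTop,
      0 < (c * ε) * (∑ τ ∈ Finset.Icc 1 (t-1), (1/(τ:ℝ))) - Real.log K := by
    have h1 : Tendsto (fun t : ℕ => (c*ε) * (∑ τ ∈ Finset.Icc 1 (t-1), (1/(τ:ℝ))))
        atTop atTop := (tendsto_const_mul_atTop_of_pos (by positivity)).2 hHsum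
    filter_upwards [h1.eventually_ge_atTop (Real.log K + 1)] with t ht
    linarith
  filter_upwards [hev] with t ht
  have hkey : 0 < Real.log (γ i) * ((∑ τ ∈ Finset.Icc 2 t, ψ i τ ω)
      - ∑ τ ∈ Finset.Icc 1 (t-1), μf τ ω) := by
    rw [hLid t]
    have h2 := hQ t
    have h3 := hLK t
    linarith
  unfold beliefEstimator
  rw [← hμf]
  by_cases h1 : 1 < γ i
  · have hA : (∑ τ ∈ Finset.Icc 1 (t-1), μf τ ω) < ∑ τ ∈ Finset.Icc 2 t, ψ i τ ω := by
      by_contra hcon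
      push_neg at hcon
      have hlog := Real.log_pos h1
      nlinarith
    rw [if_pos hA, if_pos h1]
  · have hlt : γ i < 1 := lt_of_le_of_ne (not_lt.1 h1) hγi
    have hlog := Real.log_neg hγ0 hlt
    have hA : ¬ ((∑ τ ∈ Finset.Icc 1 (t-1), μf τ ω) < ∑ τ ∈ Finset.Icc 2 t, ψ i τ ω) := by
      intro hcon
      nlinarith
    rw [if_neg hA, if_neg h1]
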